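/- The language S = { aⁿ b v₁ aⁿ v₂ | n ≥ 1, v₁,v₂ ∈ {a,b}* } equals R = { aⁿ b (a^{m_1}b)⋯(a^{m_k}b) aⁿ v | n ≥ 1, k ≥ 0, each m_i < n, v ∈ {a,b}* }. -/

import Mathlib

private lemma stmt13_aux (n : ℕ) (hn : 1 ≤ n) :
    ∀ v₁ v₂ : List (Fin 2), ∃ ms : List ℕ, (∀ m ∈ ms, m < n) ∧
      ∃ v : List (Fin 2),
      v₁ ++ List.replicate n 0 ++ v₂ =
        (ms.flatMap fun m => List.replicate m 0 ++ [1]) ++ List.replicate n 0 ++ v := by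
  intro v₁
  induction v₁ with
  | nil => intro v₂; exact ⟨[], by simp, v₂, by simp⟩
  | cons x v₁ ih =>
    intro v₂
    obtain ⟨ms, hms, v, hv⟩ := ih v₂
    have hcons : (x :: v₁) ++ List.replicate n 0 ++ v₂ =
        x :: ((ms.flatMap fun m => List.replicate m 0 ++ [1]) ++ List.replicate n 0 ++ v) := by
      simp only [List.cons_append]
      rw [← hv]
    fin_cases x
    · -- x = 0 (an 'a')
      cases ms with
      | nil =>
        refine ⟨[], by simp, 0 :: v, ?_⟩
        rw [hcons]
        simp only [List.flatMap_nil, List.nil_append]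
        show (0:Fin 2) :: (List.replicate n 0 ++ v) = List.replicate n 0 ++ 0 :: v
        rw [← List.cons_append, ← List.replicate_succ, List.replicate_succ',
          List.append_assoc, List.singleton_append]
      | cons m rest =>
        by_cases h : m + 1 < n
        · refine ⟨(m + 1) :: rest, ?_, v, ?_⟩
          · intro m' hm'
            rcases List.mem_cons.mp hm' with rfl | h'
            · exact h
            · exact hms m' (List.mem_cons_of_mem _ h')
          · rw [hcons]
            simp [List.replicate_succ]
        · have hm : m < n := hms m List.mem_cons_self
          have hmn : m + 1 = n := le_antisymm hm (not_lt.mp h)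
          refine ⟨[], by simp, 1 :: ((rest.flatMap fun m => List.replicate m 0 ++ [1]) ++
              List.replicate n 0 ++ v), ?_⟩
          rw [hcons, ← hmn]
          simp [List.replicate_succ]
    · -- x = 1 (a 'b')
      refine ⟨0 :: ms, ?_, v, ?_⟩
      · intro m' hm'
        rcases List.mem_cons.mp hm' with rfl | h'
        · exact hn
        · exact hms m' h'
      · rw [hcons]; simp

/-- over the alphabet Fin 2 (a = 0, b = 1),
S = { aⁿ b v₁ aⁿ v₂ | n ≥ 1, v₁,v₂ ∈ {a,b}* } equals
R = { aⁿ b (a^{m₁}b)⋯(a^{m_k}b) aⁿ v | n ≥ 1, k ≥ 0, each mᵢ < n, v ∈ {a,b}* }. -/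
theorem stmt13 :
    {w : List (Fin 2) | ∃ n : ℕ, 1 ≤ n ∧ ∃ v₁ v₂ : List (Fin 2),
        w = List.replicate n 0 ++ [1] ++ v₁ ++ List.replicate n 0 ++ v₂} =
    {w : List (Fin 2) | ∃ n : ℕ, 1 ≤ n ∧ ∃ ms : List ℕ, (∀ m ∈ ms, m < n) ∧
        ∃ v : List (Fin 2),
        w = List.replicate n 0 ++ [1] ++
            (ms.flatMap fun m => List.replicate m 0 ++ [1]) ++
            List.replicate n 0 ++ v} := by
  ext w
  simp only [Set.mem_setOf_eq]
  constructor
  · rintro ⟨n, hn, v₁, v₂, rfl⟩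
    obtain ⟨ms, hms, v, hv⟩ := stmt13_aux n hn v₁ v₂
    exact ⟨n, hn, ms, hms, v, by simp only [List.append_assoc] at hv ⊢; rw [hv]⟩
  · rintro ⟨n, hn, ms, hms, v, rfl⟩
    exact ⟨n, hn, _, v, rfl⟩
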